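/- Desnanot–Jacobi identity: for any (n+2)×(n+2) matrix M over a commutative ring, det(M) · det(M with first and last rows and columns removed) = det(M with last row and last column removed) · det(M with first row and first column removed) − det(M with last row and first column removed) · det(M with first row and last column removed). -/

import Mathlib

open Matrix

/-- The equivalence sending the two elements of `Fin 2` to the boundary indices `0` and
`Fin.last` and `Fin n` to the interior indices. -/
def djEquiv (n : ℕ) : (Fin 2 ⊕ Fin n) ≃ Fin (n + 2) where
  toFun x := Sum.elim (fun i => if i = 0 then 0 else Fin.last (n + 1))
    (fun k : Fin n => k.succ.castSucc) x
  invFun j := if _h : j.val = 0 then Sum.inl 0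
    else if _h2 : j.val = n + 1 then Sum.inl 1
    else Sum.inr ⟨j.val - 1, by have := j.isLt; omega⟩
  left_inv := by
    rintro (i | k)
    · fin_cases i <;> simp
    · have h1 : (k.succ.castSucc : Fin (n + 2)).val = k.val + 1 := by simp
      have := k.isLt
      simp only [Sum.elim_inr, h1]
      rw [dif_neg (by omega), dif_neg (by omega)]
      simp
  right_inv := by
    intro j
    have := j.isLt
    by_cases h0 : j.val = 0
    · simp only [dif_pos h0]; simp [Fin.ext_iff, h0.symm]; omega
    · simp only [dif_neg h0]
      by_cases hlast : j.val = n + 1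
      · simp only [dif_pos hlast]; ext; simp [hlast]
      · simp only [dif_neg hlast, Sum.elim_inr]; ext; simp; omega

/-- The Desnanot–Jacobi identity multiplied by `det M`, valid over any commutative ring. -/
theorem dj_mul {R : Type*} [CommRing R] (n : ℕ)
    (M : Matrix (Fin (n + 2)) (Fin (n + 2)) R) :
    M.det * ((M.submatrix Fin.castSucc Fin.castSucc).det * (M.submatrix Fin.succ Fin.succ).det -
      (M.submatrix Fin.castSucc Fin.succ).det * (M.submatrix Fin.succ Fin.castSucc).det) =
    M.det * (M.det *
      (M.submatrix (fun i : Fin n => i.succ.castSucc) (fun j : Fin n => j.succ.castSucc)).det) := by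
  set l : Fin (n + 2) := Fin.last (n + 1) with hldef
  set B : Matrix (Fin (n + 2)) (Fin (n + 2)) R := M.adjugate with hB
  have hl0 : l ≠ 0 := by simp [hldef, Fin.ext_iff]
  have hmid0 : ∀ k : Fin n, (k.succ.castSucc : Fin (n + 2)) ≠ 0 := by
    intro k h
    have h' := congrArg Fin.val h
    simp at h'
  have hmidl : ∀ k : Fin n, (k.succ.castSucc : Fin (n + 2)) ≠ l := by
    intro k h
    have h' := congrArg Fin.val h
    have := k.isLt
    simp [hldef] at h'
    omega
  set C : Matrix (Fin (n + 2)) (Fin (n + 2)) R :=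
    Matrix.of (fun i j => if j = 0 then B i 0 else if j = l then B i l
      else if i = j then (1 : R) else 0) with hC
  set e := djEquiv n with he
  have he0 : e (Sum.inl 0) = 0 := rfl
  have he1 : e (Sum.inl 1) = l := rfl
  have her : ∀ k : Fin n, e (Sum.inr k) = k.succ.castSucc := fun _ => rfl
  have hMB : M * B = M.det • (1 : Matrix (Fin (n + 2)) (Fin (n + 2)) R) := M.mul_adjugate
  have hMC : M * C = Matrix.of (fun i j =>
      if j = 0 then (if i = 0 then M.det else 0)
      else if j = l then (if i = l then M.det else 0) else M i j) := by
    ext i j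
    rw [mul_apply]
    by_cases h0 : j = 0
    · subst h0
      have hc : ∀ k, C k 0 = B k 0 := by intro k; simp [hC]
      simp only [hc]
      have hm : ∑ k, M i k * B k 0 = (M * B) i 0 := (mul_apply).symm
      rw [hm, hMB]
      simp [one_apply]
    · by_cases h1 : j = l
      · subst h1
        have hc : ∀ k, C k l = B k l := by intro k; simp [hC, hl0]
        simp only [hc]
        have hm : ∑ k, M i k * B k l = (M * B) i l := (mul_apply).symm
        rw [hm, hMB]
        simp [one_apply, h0]
      · have hc : ∀ k, C k j = if k = j then (1 : R) else 0 := by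
          intro k; simp [hC, h0, h1]
        simp [hc, h0, h1, mul_ite]
  have hCblock : C.submatrix e e =
      Matrix.fromBlocks !![B 0 0, B 0 l; B l 0, B l l] 0
        (Matrix.of fun (k : Fin n) (i : Fin 2) =>
          if i = 0 then B k.succ.castSucc 0 else B k.succ.castSucc l) 1 := by
    ext i j
    rcases i with i | i <;> rcases j with j | j
    · fin_cases i <;> fin_cases j <;>
        simp [he0, he1, hC, hl0]
    · fin_cases i
      · simp [he0, her, hC, hmid0 j, hmidl j, Ne.symm (hmid0 j), -Fin.castSucc_succ]
      · simp [he1, her, hC, hmid0 j, hmidl j, Ne.symm (hmidl j), -Fin.castSucc_succ]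
    · fin_cases j <;> simp [he0, he1, her, hC, hl0]
    · simp [her, hC, hmid0 j, hmidl j, one_apply, Fin.castSucc_inj, Fin.succ_inj, -Fin.castSucc_succ]
  have hNblock : (M * C).submatrix e e =
      Matrix.fromBlocks !![M.det, 0; 0, M.det]
        (Matrix.of fun (i : Fin 2) (k : Fin n) =>
          if i = 0 then M 0 k.succ.castSucc else M l k.succ.castSucc) 0
        (M.submatrix (fun i : Fin n => i.succ.castSucc) (fun j : Fin n => j.succ.castSucc)) := by
    rw [hMC]
    ext i j
    rcases i with i | i <;> rcases j with j | j
    · fin_cases i <;> fin_cases j <;>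
        simp [he0, he1, hl0, Ne.symm hl0]
    · fin_cases i <;> simp [he0, he1, her, hmid0 j, hmidl j, -Fin.castSucc_succ]
    · fin_cases j <;> simp [he0, he1, her, hmid0 i, hmidl i, Ne.symm (hmid0 i), Ne.symm (hmidl i), -Fin.castSucc_succ]
    · simp [her, hmid0 j, hmidl j, -Fin.castSucc_succ]
  have hdetC : C.det = B 0 0 * B l l - B 0 l * B l 0 := by
    rw [← det_submatrix_equiv_self e C, hCblock, det_fromBlocks_zero₁₂, det_one, mul_one,
      det_fin_two_of]
  have hdetN : (M * C).det = M.det * M.det *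
      (M.submatrix (fun i : Fin n => i.succ.castSucc) (fun j : Fin n => j.succ.castSucc)).det := by
    rw [← det_submatrix_equiv_self e (M * C), hNblock, det_fromBlocks_zero₂₁, det_fin_two_of]
    ring
  have main : M.det * (B 0 0 * B l l - B 0 l * B l 0) = M.det * M.det *
      (M.submatrix (fun i : Fin n => i.succ.castSucc) (fun j : Fin n => j.succ.castSucc)).det := by
    rw [← hdetC, ← hdetN, det_mul]
  have e00 : B 0 0 = (M.submatrix Fin.succ Fin.succ).det := by
    rw [hB, adjugate_fin_succ_eq_det_submatrix]
    simp
  have ell : B l l = (M.submatrix Fin.castSucc Fin.castSucc).det := by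
    rw [hB, adjugate_fin_succ_eq_det_submatrix]
    simp only [hldef, Fin.val_last, Fin.succAbove_last]
    rw [show (n + 1) + (n + 1) = 2 * (n + 1) by ring, pow_mul, neg_one_sq, one_pow, one_mul]
  have e0l : B 0 l = (-1 : R) ^ (n + 1) * (M.submatrix Fin.castSucc Fin.succ).det := by
    rw [hB, adjugate_fin_succ_eq_det_submatrix]
    simp [hldef]
  have el0 : B l 0 = (-1 : R) ^ (n + 1) * (M.submatrix Fin.succ Fin.castSucc).det := by
    rw [hB, adjugate_fin_succ_eq_det_submatrix]
    simp [hldef]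
  have hsign : ((-1 : R) ^ (n + 1)) * ((-1 : R) ^ (n + 1)) = 1 := by
    rw [← pow_add, show (n + 1) + (n + 1) = 2 * (n + 1) by ring, pow_mul, neg_one_sq, one_pow]
  rw [e00, ell, e0l, el0] at main
  linear_combination main + M.det * (M.submatrix Fin.castSucc Fin.succ).det *
    (M.submatrix Fin.succ Fin.castSucc).det * hsign

/-- Desnanot–Jacobi identity for an `(n+2) × (n+2)` matrix over a commutative ring. -/
theorem desnanot_jacobi {R : Type*} [CommRing R] (n : ℕ)
    (M : Matrix (Fin (n + 2)) (Fin (n + 2)) R) :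
    M.det *
      (M.submatrix (fun i : Fin n => i.succ.castSucc) (fun j : Fin n => j.succ.castSucc)).det =
    (M.submatrix Fin.castSucc Fin.castSucc).det * (M.submatrix Fin.succ Fin.succ).det -
    (M.submatrix Fin.castSucc Fin.succ).det * (M.submatrix Fin.succ Fin.castSucc).det := by
  set X := Matrix.mvPolynomialX (Fin (n + 2)) (Fin (n + 2)) ℤ with hX
  have hd : X.det ≠ 0 := Matrix.det_mvPolynomialX_ne_zero _ ℤ
  have hkey : X.det *
      (X.submatrix (fun i : Fin n => i.succ.castSucc) (fun j : Fin n => j.succ.castSucc)).det =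
      (X.submatrix Fin.castSucc Fin.castSucc).det * (X.submatrix Fin.succ Fin.succ).det -
      (X.submatrix Fin.castSucc Fin.succ).det * (X.submatrix Fin.succ Fin.castSucc).det :=
    (mul_left_cancel₀ hd (dj_mul n X)).symm
  set φ : MvPolynomial (Fin (n + 2) × Fin (n + 2)) ℤ →+* R :=
    MvPolynomial.eval₂Hom (Int.castRingHom R) (fun p => M p.1 p.2) with hφ
  have hXM : X.map ⇑φ = M := by
    rw [hφ]
    simpa [MvPolynomial.coe_eval₂Hom] using
      Matrix.mvPolynomialX_map_eval₂ (Int.castRingHom R) M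
  have h2 := congrArg φ hkey
  simpa only [_root_.map_mul, map_sub, RingHom.map_det, RingHom.mapMatrix_apply, ← submatrix_map,
    hXM] using h2
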